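/- Let A be a commutative algebra over an algebraically closed field k of characteristic zero with a locally nilpotent derivation δ such that A is δ-simple. If there exists x ∈ A with δ(x) = 1 and every element of ker δ is algebraic over k, then A = k[x], i.e., every element of A is a polynomial in x with coefficients in k, and δ = d/dx. -/
import Mathlib
open Polynomial

lemma anti {k : Type*} [Field k] [CharZero k] (p : k[X]) :
    ∃ q : k[X], derivative q = p := by
  refine ⟨p.sum fun i a => C (a / (i+1)) * X^(i+1), ?_⟩
  rw [Polynomial.sum, map_sum]
  conv_rhs => rw [← Polynomial.sum_C_mul_X_pow_eq p]
  rw [Polynomial.sum]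
  refine Finset.sum_congr rfl fun i _ => ?_
  rw [derivative_C_mul_X_pow]
  push_cast
  rw [div_mul_cancel₀ _ (Nat.cast_add_one_ne_zero i)]

theorem stmt6 (k : Type*) [Field k] [IsAlgClosed k] [CharZero k]
    (A : Type*) [CommRing A] [Nontrivial A] [Algebra k A]
    (δ : A →ₗ[k] A) (hleib : ∀ a b, δ (a * b) = δ a * b + a * δ b)
    (hln : ∀ a : A, ∃ n : ℕ, (⇑δ)^[n] a = 0)
    (hsimple : ∀ I : Ideal A, (∀ x ∈ I, δ x ∈ I) → I = ⊥ ∨ I = ⊤)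
    (x : A) (hx : δ x = 1)
    (hker : ∀ c : A, δ c = 0 → IsAlgebraic k c) :
    (∀ a : A, ∃ p : Polynomial k, a = Polynomial.aeval x p) ∧
    (∀ p : Polynomial k, δ (Polynomial.aeval x p) =
      Polynomial.aeval x (Polynomial.derivative p)) := by
  have δ1 : δ 1 = 0 := by
    have h := hleib 1 1
    simp only [mul_one, one_mul] at h
    have h2 : δ 1 + δ 1 = δ 1 + 0 := by rw [add_zero, ← h]
    exact add_left_cancel h2
  have δalg : ∀ c : k, δ (algebraMap k A c) = 0 := by
    intro c
    rw [Algebra.algebraMap_eq_smul_one, map_smul, δ1, smul_zero]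
  have part2 : ∀ p : k[X], δ (aeval x p) = aeval x (derivative p) := by
    intro p
    induction p using Polynomial.induction_on with
    | C a => simp [δalg a]
    | add p q hp hq => simp [hp, hq]
    | monomial n a ih =>
      have h1 : (C a * X^(n+1) : k[X]) = (C a * X^n) * X := by ring
      rw [h1, map_mul, aeval_X, hleib, ih, hx, mul_one]
      simp only [derivative_mul, derivative_X, derivative_C, mul_one, zero_mul,
        map_add, map_mul, aeval_X, zero_add]
  have hker' : ∀ c : A, δ c = 0 → ∃ l : k, c = algebraMap k A l := by
    intro c hc
    obtain ⟨p, hp0, hpc⟩ := hker c hc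
    have key : ∀ n : ℕ, ∀ p : k[X], p ≠ 0 → p.natDegree ≤ n →
        Polynomial.aeval c p = 0 → ∃ l : k, c = algebraMap k A l := by
      intro n
      induction n with
      | zero =>
        intro p hp0 hdeg hpc
        rw [eq_C_of_natDegree_le_zero hdeg, aeval_C] at hpc
        have hc0 : p.coeff 0 ≠ 0 := fun h => hp0 (by
          rw [eq_C_of_natDegree_le_zero hdeg, h, map_zero])
        exact absurd ((map_eq_zero_iff _ (RingHom.injective _)).mp hpc) hc0
      | succ n ih =>
        intro p hp0 hdeg hpc
        by_cases h0 : p.natDegree ≤ n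
        · exact ih p hp0 h0 hpc
        · have hdeg1 : p.degree ≠ 0 := by
            intro h
            have := natDegree_eq_zero_iff_degree_le_zero.mpr h.le
            omega
          obtain ⟨l, hl⟩ := IsAlgClosed.exists_root p hdeg1
          obtain ⟨q, hq⟩ := (dvd_iff_isRoot.mpr hl)
          have hq0 : q ≠ 0 := by rintro rfl; simp at hq; exact hp0 hq
          have hqdeg : q.natDegree ≤ n := by
            have := natDegree_mul (X_sub_C_ne_zero l) hq0
            rw [← hq, natDegree_X_sub_C] at this
            omega
          set g := c - algebraMap k A l with hgdef
          have hg : δ g = 0 := by rw [hgdef, map_sub, hc, δalg, sub_zero]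
          have hgq : g * aeval c q = 0 := by
            have := hpc
            rw [hq, map_mul, map_sub, aeval_X, aeval_C] at this
            exact this
          set I := Ideal.span {g} with hI
          have hIstable : ∀ y ∈ I, δ y ∈ I := by
            intro y hy
            obtain ⟨a, ha⟩ := Ideal.mem_span_singleton'.mp hy
            rw [← ha, hleib, hg, mul_zero, add_zero]
            exact Ideal.mem_span_singleton'.mpr ⟨δ a, rfl⟩
          rcases hsimple I hIstable with hbot | htop
          · have hgI : g ∈ I := Ideal.subset_span rfl
            rw [hbot, Ideal.mem_bot] at hgI
            exact ⟨l, by rw [← sub_eq_zero]; exact hgI⟩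
          · obtain ⟨u, hu⟩ := Ideal.mem_span_singleton'.mp
              (htop ▸ Submodule.mem_top : (1:A) ∈ I)
            have hq0' : aeval c q = 0 := by
              calc aeval c q = (u * g) * aeval c q := by rw [hu, one_mul]
              _ = u * (g * aeval c q) := by ring
              _ = 0 := by rw [hgq, mul_zero]
            exact ih q hq0 hqdeg hq0'
    exact key p.natDegree p hp0 le_rfl hpc
  have part1 : ∀ n (a : A), (⇑δ)^[n] a = 0 → ∃ p : k[X], a = aeval x p := by
    intro n
    induction n with
    | zero => intro a h; exact ⟨0, by simp [Function.iterate_zero] at h ⊢; exact h⟩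
    | succ n ih =>
      intro a h
      have h' : (⇑δ)^[n] (δ a) = 0 := by
        rw [← Function.iterate_succ_apply]; exact h
      obtain ⟨p, hp⟩ := ih (δ a) h'
      obtain ⟨q, hq⟩ := anti p
      have hδ : δ (a - aeval x q) = 0 := by
        rw [map_sub, part2, hq, ← hp, sub_self]
      obtain ⟨l, hl⟩ := hker' _ hδ
      refine ⟨q + C l, ?_⟩
      rw [map_add, aeval_C]
      linear_combination hl
  exact ⟨fun a => (hln a).elim (fun n hn => part1 n a hn), part2⟩
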